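/- Let b ∈ L^∞(]0,1[) with c − R ≤ b(τ) ≤ B almost everywhere for constants 0 < c − R ≤ B, let λ ∈ L²(]0,1[) with decomposition λ = λ̲ + λ̄ into mean-free part and mean. Define δξ_τ := (1/2) λ̲ u for a fixed unit vector u ∈ ℝ², and δL := (1/(2L)) (∫₀¹ b λ̲ dτ − (c−R) λ̄) for L > 0. Then ∫₀¹ (2 b (1/2) λ̲ λ − 2 L δL λ) dτ ≥ (c − R) ‖λ‖²_{L²}. -/

import Mathlib

open MeasureTheory

/-- Key computation in the inf-sup proof: with `b(τ) = ξ_τᵀu`, `c − R ≤ b ≤ B` a.e.,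
`δξ_τ = (1/2)λ̲u` and `δL = (1/(2L))(∫b λ̲ − (c−R)λ̄)`, one has
`∫ (2b·(1/2)λ̲·λ − 2LδL·λ) ≥ (c−R)‖λ‖²_{L²}`. -/
theorem inf_sup_key_estimate
    (b lam : ℝ → ℝ) (c R B L : ℝ)
    (hcR : 0 < c - R) (hcRB : c - R ≤ B) (hL : 0 < L)
    (hbmeas : AEMeasurable b (volume.restrict (Set.Ioo (0:ℝ) 1)))
    (hb : ∀ᵐ τ ∂(volume.restrict (Set.Ioo (0:ℝ) 1)),
      c - R ≤ b τ ∧ b τ ≤ B)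
    (hlam : IntegrableOn lam (Set.Ioo (0:ℝ) 1))
    (hlamsq : IntegrableOn (fun τ => (lam τ) ^ 2) (Set.Ioo (0:ℝ) 1))
    (lbar : ℝ) (hlbar : lbar = ∫ τ in Set.Ioo (0:ℝ) 1, lam τ)
    (lt : ℝ → ℝ) (hlt : ∀ τ, lt τ = lam τ - lbar)
    (hblt : IntegrableOn (fun τ => b τ * lt τ) (Set.Ioo (0:ℝ) 1))
    (hbltl : IntegrableOn (fun τ => b τ * lt τ * lam τ) (Set.Ioo (0:ℝ) 1))
    (δL : ℝ)
    (hδL : δL = (1 / (2 * L)) *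
      ((∫ τ in Set.Ioo (0:ℝ) 1, b τ * lt τ) - (c - R) * lbar)) :
    (∫ τ in Set.Ioo (0:ℝ) 1,
        (2 * b τ * (1 / 2 * lt τ) * lam τ - 2 * L * δL * lam τ))
      ≥ (c - R) * ∫ τ in Set.Ioo (0:ℝ) 1, (lam τ) ^ 2 := by

  have hvol : (volume (Set.Ioo (0:ℝ) 1)) = 1 := by
    simp [Real.volume_Ioo]
  have hconst : ∀ r : ℝ, IntegrableOn (fun _ => r) (Set.Ioo (0:ℝ) 1) := by
    intro r
    exact integrableOn_const (by rw [hvol]; exact ENNReal.one_ne_top) enorm_ne_top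
  have hIconst : ∀ r : ℝ, (∫ _ in Set.Ioo (0:ℝ) 1, r) = r := by
    intro r
    rw [setIntegral_const, measureReal_def, hvol]
    simp
  -- integrability facts
  have hlamc : IntegrableOn (fun τ => (2 * L * δL) * lam τ) (Set.Ioo (0:ℝ) 1) :=
    hlam.const_mul _
  have hbltc : IntegrableOn (fun τ => lbar * (b τ * lt τ)) (Set.Ioo (0:ℝ) 1) :=
    hblt.const_mul _
  have hbltsq : IntegrableOn (fun τ => b τ * lt τ ^ 2) (Set.Ioo (0:ℝ) 1) := by
    have he : (fun τ => b τ * lt τ ^ 2)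
        = fun τ => b τ * lt τ * lam τ - lbar * (b τ * lt τ) := by
      funext τ; rw [hlt]; ring
    rw [he]; exact hbltl.sub hbltc
  have hltsq : IntegrableOn (fun τ => lt τ ^ 2) (Set.Ioo (0:ℝ) 1) := by
    have he : (fun τ => lt τ ^ 2)
        = fun τ => ((lam τ) ^ 2 - (2 * lbar) * lam τ) + lbar ^ 2 := by
      funext τ; rw [hlt]; ring
    rw [he]; exact (hlamsq.sub (hlam.const_mul _)).add (hconst _)
  -- value of 2 L δL
  have h2L : 2 * L * δL = (∫ τ in Set.Ioo (0:ℝ) 1, b τ * lt τ) - (c - R) * lbar := by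
    rw [hδL]; field_simp
  -- rewrite LHS
  have hA : (∫ τ in Set.Ioo (0:ℝ) 1,
        (2 * b τ * (1 / 2 * lt τ) * lam τ - 2 * L * δL * lam τ))
      = (∫ τ in Set.Ioo (0:ℝ) 1, b τ * lt τ * lam τ) - (2 * L * δL) * lbar := by
    have he : (fun τ => 2 * b τ * (1 / 2 * lt τ) * lam τ - 2 * L * δL * lam τ)
        = fun τ => b τ * lt τ * lam τ - (2 * L * δL) * lam τ := by
      funext τ; ring
    rw [he, integral_sub hbltl hlamc, integral_const_mul, hlbar]
  have hB : (∫ τ in Set.Ioo (0:ℝ) 1, b τ * lt τ ^ 2)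
      = (∫ τ in Set.Ioo (0:ℝ) 1, b τ * lt τ * lam τ)
        - lbar * (∫ τ in Set.Ioo (0:ℝ) 1, b τ * lt τ) := by
    have he : (fun τ => b τ * lt τ ^ 2)
        = fun τ => b τ * lt τ * lam τ - lbar * (b τ * lt τ) := by
      funext τ; rw [hlt]; ring
    rw [he, integral_sub hbltl hbltc, integral_const_mul]
  have hC : (∫ τ in Set.Ioo (0:ℝ) 1, lt τ ^ 2)
      = (∫ τ in Set.Ioo (0:ℝ) 1, (lam τ) ^ 2) - lbar ^ 2 := by
    have he : (fun τ => lt τ ^ 2)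
        = fun τ => ((lam τ) ^ 2 - (2 * lbar) * lam τ) + lbar ^ 2 := by
      funext τ; rw [hlt]; ring
    have h1 : IntegrableOn (fun τ => (lam τ) ^ 2 - (2 * lbar) * lam τ) (Set.Ioo (0:ℝ) 1) :=
      hlamsq.sub (hlam.const_mul _)
    rw [he, integral_add h1 (hconst _),
      integral_sub hlamsq (hlam.const_mul _), integral_const_mul, hIconst, ← hlbar]
    ring
  -- main pointwise estimate
  have hmono : (∫ τ in Set.Ioo (0:ℝ) 1, (c - R) * lt τ ^ 2)
      ≤ ∫ τ in Set.Ioo (0:ℝ) 1, b τ * lt τ ^ 2 := by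
    refine integral_mono_ae (hltsq.const_mul _) hbltsq ?_
    filter_upwards [hb] with τ hτ
    exact mul_le_mul_of_nonneg_right hτ.1 (sq_nonneg _)
  rw [integral_const_mul] at hmono
  calc (c - R) * ∫ τ in Set.Ioo (0:ℝ) 1, (lam τ) ^ 2
      = (c - R) * ((∫ τ in Set.Ioo (0:ℝ) 1, lt τ ^ 2) + lbar ^ 2) := by rw [hC]; ring
    _ ≤ (∫ τ in Set.Ioo (0:ℝ) 1, b τ * lt τ ^ 2) + (c - R) * lbar ^ 2 := by
        nlinarith [hmono]
    _ = (∫ τ in Set.Ioo (0:ℝ) 1,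
        (2 * b τ * (1 / 2 * lt τ) * lam τ - 2 * L * δL * lam τ)) := by
        rw [hA, hB, h2L]; ring
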